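/- Let h_1 : Σ → GF(2)[x]/(x^L + 1) be a fully independent uniformly random hash of symbols, and define the Cyclic hash h(a_1,...,a_n) = h_1(a_1) x^{n-1} + h_1(a_2) x^{n-2} + ... + h_1(a_n) in GF(2)[x]/(x^L+1), with L ≥ n. If n is even, then P(h(a^n) = 0) ≥ 1/2^{L-1} > 1/2^L; in particular the Cyclic hash family is not uniform for even n. -/

import Mathlib

open MeasureTheory Polynomial
open scoped ENNReal

private lemma geom_factor {R : Type*} [CommRing R] (x : R) (m : ℕ) :
    ∑ j ∈ Finset.range (2 * m), x ^ j = (1 + x) * ∑ k ∈ Finset.range m, x ^ (2 * k) := by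
  induction m with
  | zero => simp
  | succ m ih =>
    have h : 2 * (m + 1) = (2 * m) + 1 + 1 := by ring
    rw [h, Finset.sum_range_succ, Finset.sum_range_succ, ih, Finset.sum_range_succ]
    ring

private lemma cyclic_aux (n L : ℕ) (hL : 1 ≤ L) (hn : Even n) :
    ∃ q : AdjoinRoot ((X : Polynomial (ZMod 2)) ^ L + 1), q ≠ 0 ∧
      q * ∑ i : Fin n,
        (AdjoinRoot.root ((X : Polynomial (ZMod 2)) ^ L + 1)) ^ (n - 1 - (i : ℕ)) = 0 := by
  set p : Polynomial (ZMod 2) := X ^ L + 1 with hp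
  set ρ : AdjoinRoot p := AdjoinRoot.root p with hρ
  set g : Polynomial (ZMod 2) := ∑ j ∈ Finset.range L, X ^ j with hg
  refine ⟨AdjoinRoot.mk p g, ?_, ?_⟩
  · rw [Ne, AdjoinRoot.mk_eq_zero]
    intro hdvd
    have hpdeg : p.natDegree = L := by
      rw [hp, show (1 : Polynomial (ZMod 2)) = C 1 from (map_one C).symm]
      exact natDegree_X_pow_add_C
    have hgdeg : g.natDegree ≤ L - 1 := by
      rw [hg]
      apply Polynomial.natDegree_sum_le_of_forall_le
      intro j hj
      simp only [natDegree_X_pow]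
      exact Nat.le_sub_one_of_lt (Finset.mem_range.mp hj)
    have hg0 : g = 0 := Polynomial.eq_zero_of_dvd_of_natDegree_lt hdvd (by omega)
    have hc : g.coeff 0 = 1 := by
      rw [hg, Polynomial.finset_sum_coeff, Finset.sum_eq_single 0]
      · simp
      · intro j _ hj; simp [coeff_X_pow, Ne.symm hj]
      · intro h; exact absurd (Finset.mem_range.mpr (by omega)) h
    rw [hg0] at hc
    simp at hc
  · have h2 : (2 : AdjoinRoot p) = 0 := by
      rw [show (2 : AdjoinRoot p) = ((2 : ℕ) : AdjoinRoot p) by norm_cast,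
        ← map_natCast (AdjoinRoot.of p)]
      rw [show ((2 : ℕ) : ZMod 2) = 0 by decide, map_zero]
    have hneg1 : (-1 : AdjoinRoot p) = 1 := by
      have h11 : (1 : AdjoinRoot p) + 1 = 0 := by rw [one_add_one_eq_two, h2]
      linear_combination -h11
    have hρL : ρ ^ L + 1 = 0 := by
      have h : AdjoinRoot.mk p (X ^ L + 1) = 0 := AdjoinRoot.mk_self
      rw [map_add, map_pow, AdjoinRoot.mk_X, map_one] at h
      exact h
    have hq1ρ : (AdjoinRoot.mk p g) * (1 + ρ) = 0 := by
      have hqsum : AdjoinRoot.mk p g = ∑ j ∈ Finset.range L, ρ ^ j := by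
        rw [hg, map_sum]
        simp [AdjoinRoot.mk_X, hρ]
      rw [hqsum]
      calc (∑ j ∈ Finset.range L, ρ ^ j) * (1 + ρ)
          = (∑ j ∈ Finset.range L, ρ ^ j) * (ρ - 1) := by
            rw [sub_eq_add_neg, hneg1]; ring
        _ = ρ ^ L - 1 := geom_sum_mul ρ L
        _ = ρ ^ L + 1 := by rw [sub_eq_add_neg, hneg1]
        _ = 0 := hρL
    have hsum : (∑ i : Fin n, ρ ^ (n - 1 - (i : ℕ))) = ∑ j ∈ Finset.range n, ρ ^ j := by
      rw [Fin.sum_univ_eq_sum_range (fun i => ρ ^ (n - 1 - i)) n]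
      exact Finset.sum_range_reflect (fun j => ρ ^ j) n
    obtain ⟨m, hm⟩ := hn
    have hm' : n = 2 * m := by omega
    rw [hsum, hm', geom_factor ρ m, ← mul_assoc, hq1ρ, zero_mul]

private lemma ennreal_half : ∀ L : ℕ, 1 ≤ L →
    (1 : ℝ≥0∞) / 2 ^ L + 1 / 2 ^ L = 1 / 2 ^ (L - 1) := by
  intro L hL
  rw [ENNReal.div_add_div_same]
  have hL2 : (2 : ℝ≥0∞) ^ L = 2 * 2 ^ (L - 1) := by
    rw [← pow_succ']; congr 1; omega
  rw [one_add_one_eq_two, hL2, show (2 : ℝ≥0∞) = 2 * 1 from (mul_one 2).symm,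
    mul_assoc, ENNReal.mul_div_mul_left _ _ two_ne_zero ENNReal.ofNat_ne_top]
  simp

/-- The Cyclic hash `h(a_1,…,a_n) = Σ h_1(a_i) x^{n-i}` in `GF(2)[x]/(x^L+1)` is not
uniform for `n` even: `P(h(aᵃⁿ) = 0) ≥ 1/2^{L-1} > 1/2^L`. -/
theorem stmt_3
    {Ω : Type*} [MeasurableSpace Ω] (μ : Measure Ω) [IsProbabilityMeasure μ]
    {A : Type*} (n L : ℕ) (hnL : n ≤ L) (hL : 1 ≤ L) (hn : Even n) (hn1 : 1 ≤ n)
    (h₁ : Ω → A → AdjoinRoot ((X : Polynomial (ZMod 2)) ^ L + 1))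
    (hmeas : ∀ (b : A) (r : AdjoinRoot ((X : Polynomial (ZMod 2)) ^ L + 1)),
      MeasurableSet {ω | h₁ ω b = r})
    (hunif : ∀ (b : A) (r : AdjoinRoot ((X : Polynomial (ZMod 2)) ^ L + 1)),
      μ {ω | h₁ ω b = r} = 1 / 2 ^ L)
    (hind : ProbabilityTheory.iIndepFun
      (m := fun _ : A => (⊤ : MeasurableSpace (AdjoinRoot ((X : Polynomial (ZMod 2)) ^ L + 1))))
      (fun b ω => h₁ ω b) μ)
    (a : A) :
    1 / 2 ^ (L - 1) ≤
        μ {ω | (∑ i : Fin n,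
          h₁ ω a * (AdjoinRoot.root ((X : Polynomial (ZMod 2)) ^ L + 1)) ^ (n - 1 - (i : ℕ))) = 0}
      ∧ (1 : ℝ≥0∞) / 2 ^ L < 1 / 2 ^ (L - 1) := by
  obtain ⟨q, hqne, hqS⟩ := cyclic_aux n L hL hn
  refine ⟨?_, ?_⟩
  · have hsum : ∀ ω, (∑ i : Fin n, h₁ ω a *
        (AdjoinRoot.root ((X : Polynomial (ZMod 2)) ^ L + 1)) ^ (n - 1 - (i : ℕ)))
        = h₁ ω a * ∑ i : Fin n,
          (AdjoinRoot.root ((X : Polynomial (ZMod 2)) ^ L + 1)) ^ (n - 1 - (i : ℕ)) := by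
      intro ω; rw [Finset.mul_sum]
    have hsub : {ω | h₁ ω a = 0} ∪ {ω | h₁ ω a = q} ⊆
        {ω | (∑ i : Fin n, h₁ ω a *
          (AdjoinRoot.root ((X : Polynomial (ZMod 2)) ^ L + 1)) ^ (n - 1 - (i : ℕ))) = 0} := by
      rintro ω (hω | hω) <;> simp only [Set.mem_setOf_eq] at hω ⊢
      · rw [hsum ω, hω, zero_mul]
      · rw [hsum ω, hω, hqS]
    have hdisj : Disjoint {ω | h₁ ω a = 0} {ω | h₁ ω a = q} := by
      rw [Set.disjoint_left]
      intro ω h0 hq'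
      simp only [Set.mem_setOf_eq] at h0 hq'
      exact hqne (hq'.symm.trans h0)
    calc (1 : ℝ≥0∞) / 2 ^ (L - 1)
        = 1 / 2 ^ L + 1 / 2 ^ L := (ennreal_half L hL).symm
      _ = μ {ω | h₁ ω a = 0} + μ {ω | h₁ ω a = q} := by rw [hunif a 0, hunif a q]
      _ = μ ({ω | h₁ ω a = 0} ∪ {ω | h₁ ω a = q}) :=
          (measure_union hdisj (hmeas a q)).symm
      _ ≤ _ := measure_mono hsub
  · rw [one_div, one_div, ENNReal.inv_lt_inv]
    exact_mod_cast Nat.pow_lt_pow_right one_lt_two (show L - 1 < L by omega)
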